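/- arXiv:1606.02109 — 4 statements merged into one kernel-verified Lean document; each statement's English description precedes it below -/
import Mathlib

section
/- Let Λ and Λ₀ be positive definite d×d real matrices, μ₀ ∈ ℝ^d, and for n ∈ ℕ and a statistic s ∈ ℝ^d define μ(n, s) = (Λ₀ + nΛ)⁻¹(Λ·s + Λ₀·μ₀). Let δ be an ℝ^d-valued random vector whose coordinates are i.i.d. Laplace(0, b) for a fixed scale b > 0. Then for every data sequence with sufficient statistics n·x̄(n), the private posterior mean μ_DP = μ(n, n·x̄(n) + δ) and the non-private posterior mean μ_NP = μ(n, n·x̄(n)) satisfy: for every α > 0, Pr{‖μ_DP − μ_NP‖₁ ≥ α} → 0 as n → ∞. (In particular, μ_DP − μ_NP = (Λ₀ + nΛ)⁻¹Λδ.) -/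
open MeasureTheory ProbabilityTheory Filter Matrix

/-- The Laplace distribution with location `0` and scale `b`,
with density `x ↦ (1/(2b)) · exp (−|x|/b)` with respect to Lebesgue measure. -/
noncomputable def laplaceMeasure (b : ℝ) : Measure ℝ :=
  volume.withDensity fun x => ENNReal.ofReal ((2 * b)⁻¹ * Real.exp (-|x| / b))

/-- The ℓ¹ norm on `ℝ^d`. -/
def l1 {d : ℕ} (v : Fin d → ℝ) : ℝ := ∑ i, |v i|

/-- The posterior mean of a Gaussian mean `μ ∼ N(μ₀, Λ₀)`, `xᵢ ∼ N(μ, Λ)` (precision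
parameterisation), as a function of the sample size `n` and the sufficient statistic
`s = n·x̄`: `μ(n, s) = (Λ₀ + nΛ)⁻¹ (Λ s + Λ₀ μ₀)`. -/
noncomputable def postMean {d : ℕ} (Λ Λ₀ : Matrix (Fin d) (Fin d) ℝ) (μ₀ : Fin d → ℝ)
    (n : ℕ) (s : Fin d → ℝ) : Fin d → ℝ :=
  (Λ₀ + (n : ℝ) • Λ)⁻¹ *ᵥ (Λ *ᵥ s + Λ₀ *ᵥ μ₀)

lemma aux_pd {d : ℕ} (Λ Λ₀ : Matrix (Fin d) (Fin d) ℝ)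
    (hΛ : Λ.PosDef) (hΛ₀ : Λ₀.PosDef) {c : ℝ} (hc : 0 ≤ c) :
    (c • Λ₀ + Λ).PosDef := by
  refine Matrix.PosDef.posSemidef_add ?_ hΛ
  refine ⟨?_, fun x => ?_⟩
  · unfold Matrix.IsHermitian
    rw [conjTranspose_smul]
    rw [hΛ₀.isHermitian]
    simp
  · exact (hΛ₀.posSemidef.smul hc).2 x

lemma aux_tendsto {d : ℕ} (Λ Λ₀ : Matrix (Fin d) (Fin d) ℝ)
    (hΛ : Λ.PosDef) (hΛ₀ : Λ₀.PosDef) (v : Fin d → ℝ) :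
    Tendsto (fun n : ℕ => l1 ((Λ₀ + (n : ℝ) • Λ)⁻¹ *ᵥ (Λ *ᵥ v))) atTop (nhds 0) := by
  have hA0 : ((0:ℝ) • Λ₀ + Λ) = Λ := by simp
  have hinv : ContinuousAt Inv.inv ((0:ℝ) • Λ₀ + Λ) := by
    apply continuousAt_matrix_inv
    rw [Ring.inverse_eq_inv']
    apply continuousAt_inv₀
    rw [hA0]
    exact hΛ.det_pos.ne'
  have hsmul : Continuous fun t : ℝ => t • Λ₀ + Λ :=
    (continuous_id.smul continuous_const).add continuous_const
  have hmv : Continuous fun M : Matrix (Fin d) (Fin d) ℝ => M *ᵥ (Λ *ᵥ v) :=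
    continuous_id.matrix_mulVec continuous_const
  have h1 : ContinuousAt (fun t : ℝ => (t • Λ₀ + Λ)⁻¹) 0 :=
    ContinuousAt.comp (g := Inv.inv) (f := fun t : ℝ => t • Λ₀ + Λ) hinv hsmul.continuousAt
  have hcont : ContinuousAt (fun t : ℝ => (t • Λ₀ + Λ)⁻¹ *ᵥ (Λ *ᵥ v)) 0 :=
    ContinuousAt.comp (g := fun M : Matrix (Fin d) (Fin d) ℝ => M *ᵥ (Λ *ᵥ v))
      hmv.continuousAt h1
  have tend1 : Tendsto (fun n : ℕ => (((n:ℝ)⁻¹ • Λ₀ + Λ)⁻¹ *ᵥ (Λ *ᵥ v))) atTop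
      (nhds (((0:ℝ) • Λ₀ + Λ)⁻¹ *ᵥ (Λ *ᵥ v))) :=
    hcont.tendsto.comp tendsto_inv_atTop_nhds_zero_nat
  have tend2 : Tendsto (fun n : ℕ => (n:ℝ)⁻¹ • (((n:ℝ)⁻¹ • Λ₀ + Λ)⁻¹ *ᵥ (Λ *ᵥ v)))
      atTop (nhds 0) := by
    have := (tendsto_inv_atTop_nhds_zero_nat (𝕜 := ℝ)).smul tend1
    simpa using this
  have heq : ∀ᶠ n : ℕ in atTop, (n:ℝ)⁻¹ • (((n:ℝ)⁻¹ • Λ₀ + Λ)⁻¹ *ᵥ (Λ *ᵥ v))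
      = (Λ₀ + (n : ℝ) • Λ)⁻¹ *ᵥ (Λ *ᵥ v) := by
    filter_upwards [eventually_ge_atTop 1] with n hn
    have hn0 : (n:ℝ) ≠ 0 := by positivity
    haveI : Invertible (n:ℝ) := invertibleOfNonzero hn0
    have hdet : IsUnit ((n:ℝ)⁻¹ • Λ₀ + Λ).det :=
      (aux_pd Λ Λ₀ hΛ hΛ₀ (by positivity)).det_pos.ne'.isUnit
    have hsplit : Λ₀ + (n : ℝ) • Λ = (n:ℝ) • ((n:ℝ)⁻¹ • Λ₀ + Λ) := by
      rw [smul_add, smul_smul, mul_inv_cancel₀ hn0, one_smul, add_comm]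
    rw [hsplit, Matrix.inv_smul _ _ hdet, invOf_eq_inv, Matrix.smul_mulVec]
  have tendvec : Tendsto (fun n : ℕ => (Λ₀ + (n : ℝ) • Λ)⁻¹ *ᵥ (Λ *ᵥ v)) atTop (nhds 0) :=
    tend2.congr' heq
  have hl1 : Continuous (l1 (d := d)) := by
    unfold l1
    exact continuous_finset_sum _ fun i _ => (continuous_apply i).abs
  have := (hl1.tendsto 0).comp tendvec
  have h0 : l1 (0 : Fin d → ℝ) = 0 := by simp [l1]
  rw [h0] at this
  exact this

/-- **Asymptotic consistency of the Laplace-mechanism Gaussian-mean estimate.**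
If `δ` has i.i.d. `Laplace(0, b)` coordinates, then for any data sequence with sufficient
statistics `s n (= n·x̄(n))`, the private posterior mean `μ_DP = μ(n, s n + δ)` and the
non-private one `μ_NP = μ(n, s n)` satisfy `μ_DP − μ_NP = (Λ₀ + nΛ)⁻¹ Λ δ` and
`Pr{‖μ_DP − μ_NP‖₁ ≥ α} → 0` for every `α > 0`. -/
theorem stmt_3 {d : ℕ} (Λ Λ₀ : Matrix (Fin d) (Fin d) ℝ)
    (hΛ : Λ.PosDef) (hΛ₀ : Λ₀.PosDef) (μ₀ : Fin d → ℝ)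
    (b : ℝ) (hb : 0 < b)
    {Ω : Type*} [MeasurableSpace Ω] (P : Measure Ω) [IsProbabilityMeasure P]
    (δ : Ω → Fin d → ℝ) (hmeas : ∀ j, Measurable fun ω => δ ω j)
    (hlaw : ∀ j, Measure.map (fun ω => δ ω j) P = laplaceMeasure b)
    (hindep : iIndepFun (m := fun _ : Fin d => (inferInstance : MeasurableSpace ℝ))
      (fun j ω => δ ω j) P)
    (s : ℕ → Fin d → ℝ) :
    (∀ (n : ℕ) (ω : Ω),
      postMean Λ Λ₀ μ₀ n (s n + δ ω) - postMean Λ Λ₀ μ₀ n (s n)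
        = (Λ₀ + (n : ℝ) • Λ)⁻¹ *ᵥ (Λ *ᵥ δ ω)) ∧
    ∀ α : ℝ, 0 < α →
      Tendsto
        (fun n : ℕ =>
          P {ω | α ≤ l1 (postMean Λ Λ₀ μ₀ n (s n + δ ω) - postMean Λ Λ₀ μ₀ n (s n))})
        atTop (nhds 0) := by
  have hdiff : ∀ (n : ℕ) (ω : Ω),
      postMean Λ Λ₀ μ₀ n (s n + δ ω) - postMean Λ Λ₀ μ₀ n (s n)
        = (Λ₀ + (n : ℝ) • Λ)⁻¹ *ᵥ (Λ *ᵥ δ ω) := by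
    intro n ω
    unfold postMean
    rw [← Matrix.mulVec_sub, Matrix.mulVec_add]
    exact congrArg (fun u => (Λ₀ + (n : ℝ) • Λ)⁻¹ *ᵥ u) (by abel)
  refine ⟨hdiff, fun α hα => ?_⟩
  -- measurability of δ
  have hδmeas : Measurable δ := measurable_pi_iff.mpr hmeas
  set E : ℕ → Set Ω := fun n =>
    {ω | α ≤ l1 (postMean Λ Λ₀ μ₀ n (s n + δ ω) - postMean Λ Λ₀ μ₀ n (s n))} with hE
  have hEeq : ∀ n, E n = {ω | α ≤ l1 ((Λ₀ + (n : ℝ) • Λ)⁻¹ *ᵥ (Λ *ᵥ δ ω))} := by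
    intro n; ext ω; simp [hE, hdiff n ω]
  have hl1c : ∀ (n : ℕ), Continuous fun v : Fin d → ℝ =>
      l1 ((Λ₀ + (n : ℝ) • Λ)⁻¹ *ᵥ (Λ *ᵥ v)) := by
    intro n
    have : Continuous fun v : Fin d → ℝ => (Λ₀ + (n : ℝ) • Λ)⁻¹ *ᵥ (Λ *ᵥ v) :=
      continuous_const.matrix_mulVec (continuous_const.matrix_mulVec continuous_id)
    exact (continuous_finset_sum _ fun i _ => (continuous_apply i).abs).comp this
  have hEmeas : ∀ n, MeasurableSet (E n) := by
    intro n
    rw [hEeq n]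
    exact measurableSet_le measurable_const (((hl1c n).measurable).comp hδmeas)
  -- pointwise convergence of the indicators
  have hpt : ∀ ω : Ω, Tendsto (fun n => (E n).indicator (fun _ => (1:ENNReal)) ω)
      atTop (nhds 0) := by
    intro ω
    have := aux_tendsto Λ Λ₀ hΛ hΛ₀ (δ ω)
    have hev := this.eventually_lt_const hα
    refine tendsto_const_nhds.congr' ?_
    filter_upwards [hev] with n hn
    have : ω ∉ E n := by
      rw [hEeq n]
      simpa using not_le.mpr hn
    simp [Set.indicator_of_notMem this]
  have key : Tendsto (fun n => ∫⁻ ω, (E n).indicator (fun _ => (1:ENNReal)) ω ∂P)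
      atTop (nhds (∫⁻ _, (0:ENNReal) ∂P)) := by
    refine tendsto_lintegral_of_dominated_convergence (fun _ => (1:ENNReal))
      (fun n => (measurable_const.indicator (hEmeas n))) ?_ ?_ ?_
    · intro n
      filter_upwards with ω
      by_cases h : ω ∈ E n <;> simp [h]
    · simp
    · filter_upwards with ω using hpt ω
  have hfin : (fun n => ∫⁻ ω, (E n).indicator (fun _ => (1:ENNReal)) ω ∂P)
      = fun n => P (E n) := by
    funext n
    exact lintegral_indicator_one (hEmeas n)
  rw [hfin] at key
  simpa using key
end

section
/- Let Λ and Λ₀ be positive definite d×d real matrices, let B > 0, ε > 0, and let δ be an ℝ^d-valued random vector with i.i.d. coordinates δⱼ ∼ Laplace(0, 2Bd/ε). Then the differentially private Gaussian-mean estimate μ_DP = (Λ₀ + nΛ)⁻¹(Λ(n·x̄ + δ) + Λ₀μ₀) converges to the non-private estimate μ_NP = (Λ₀ + nΛ)⁻¹(Λ·n·x̄ + Λ₀μ₀) at rate O(1/n): for every α > 0 there exist constants C and N such that for all n ≥ N, Pr{‖μ_DP − μ_NP‖₁ > C/n} < α. -/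
open MeasureTheory ProbabilityTheory Filter Matrix

/- # Auxiliary material -/

/-- Sum of absolute values of the entries of a matrix. -/
noncomputable def Esum {d : ℕ} (A : Matrix (Fin d) (Fin d) ℝ) : ℝ := ∑ i, ∑ j, |A i j|

lemma l1_nonneg {d : ℕ} (v : Fin d → ℝ) : 0 ≤ l1 v :=
  Finset.sum_nonneg fun _ _ => abs_nonneg _

lemma Esum_nonneg {d : ℕ} (A : Matrix (Fin d) (Fin d) ℝ) : 0 ≤ Esum A :=
  Finset.sum_nonneg fun _ _ => Finset.sum_nonneg fun _ _ => abs_nonneg _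

lemma l1_mulVec_le {d : ℕ} (A : Matrix (Fin d) (Fin d) ℝ) (v : Fin d → ℝ) :
    l1 (A *ᵥ v) ≤ Esum A * l1 v := by
  have hvj : ∀ j, |v j| ≤ l1 v := fun j =>
    Finset.single_le_sum (f := fun i => |v i|) (fun i _ => abs_nonneg _) (Finset.mem_univ j)
  calc l1 (A *ᵥ v) = ∑ i, |∑ j, A i j * v j| := rfl
    _ ≤ ∑ i, ∑ j, |A i j * v j| :=
        Finset.sum_le_sum fun i _ => Finset.abs_sum_le_sum_abs _ _
    _ ≤ ∑ i, ∑ j, |A i j| * l1 v := by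
        refine Finset.sum_le_sum fun i _ => Finset.sum_le_sum fun j _ => ?_
        rw [abs_mul]
        exact mul_le_mul_of_nonneg_left (hvj j) (abs_nonneg _)
    _ = Esum A * l1 v := by rw [Esum, Finset.sum_mul]; simp [Finset.sum_mul]

lemma l1_smul {d : ℕ} (c : ℝ) (v : Fin d → ℝ) : l1 (c • v) = |c| * l1 v := by
  simp [l1, abs_mul, Finset.mul_sum]

lemma posSemidef_smul' {d : ℕ} {A : Matrix (Fin d) (Fin d) ℝ} (hA : A.PosSemidef)
    {t : ℝ} (ht : 0 ≤ t) : (t • A).PosSemidef := by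
  refine ⟨?_, fun x => ?_⟩
  · unfold Matrix.IsHermitian
    rw [conjTranspose_smul, hA.1.eq]
    simp
  · exact (hA.smul ht).2 x

lemma isUnit_det_smul_add {d : ℕ} (Λ Λ₀ : Matrix (Fin d) (Fin d) ℝ)
    (hΛ : Λ.PosDef) (hΛ₀ : Λ₀.PosDef) {t : ℝ} (ht : 0 ≤ t) :
    IsUnit (t • Λ₀ + Λ).det := by
  have h : (t • Λ₀ + Λ).PosDef :=
    Matrix.PosDef.posSemidef_add (posSemidef_smul' hΛ₀.posSemidef ht) hΛ
  exact h.det_pos.ne'.isUnit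

lemma inv_smul_mat {d : ℕ} (A : Matrix (Fin d) (Fin d) ℝ) (k : ℝ) (hk : k ≠ 0)
    (h : IsUnit A.det) : (k • A)⁻¹ = k⁻¹ • A⁻¹ := by
  have := Matrix.inv_smul' (A := A) (Units.mk0 k hk) h
  simp only [Units.smul_def, Units.val_inv_eq_inv_val, Units.val_mk0] at this
  exact this

lemma tendsto_inv_seq {d : ℕ} (Λ Λ₀ : Matrix (Fin d) (Fin d) ℝ) (hΛ : IsUnit Λ.det) :
    Tendsto (fun n : ℕ => ((n : ℝ)⁻¹ • Λ₀ + Λ)⁻¹) atTop (nhds Λ⁻¹) := by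
  have hc : ContinuousAt Inv.inv Λ := by
    apply continuousAt_matrix_inv
    rw [Ring.inverse_eq_inv']
    exact continuousAt_inv₀ (by simpa using hΛ.ne_zero)
  have h1 : Tendsto (fun n : ℕ => ((n : ℝ)⁻¹ • Λ₀ + Λ)) atTop (nhds Λ) := by
    have : Tendsto (fun n : ℕ => (n : ℝ)⁻¹) atTop (nhds 0) :=
      tendsto_inv_atTop_zero.comp tendsto_natCast_atTop_atTop
    have := (this.smul_const Λ₀).add_const Λ
    simpa using this
  exact hc.tendsto.comp h1

lemma continuous_Esum {d : ℕ} : Continuous (Esum (d := d)) := by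
  refine continuous_finset_sum _ fun i _ => continuous_finset_sum _ fun j _ => ?_
  exact ((continuous_apply j).comp (continuous_apply i)).abs

/-- Tail bound: any real random variable has arbitrarily small tail probability. -/
lemma exists_tail_bound {Ω : Type*} [MeasurableSpace Ω] (P : Measure Ω)
    [IsProbabilityMeasure P] (g : Ω → ℝ) (hg : Measurable g) {α : ℝ} (hα : 0 < α) :
    ∃ M : ℝ, P {ω | M < g ω} < ENNReal.ofReal α := by
  set S : ℕ → Set Ω := fun k => {ω | (k : ℝ) < g ω} with hS
  have hmeas : ∀ k, MeasurableSet (S k) := fun k => measurableSet_lt measurable_const hg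
  have hanti : Antitone S := by
    intro k m hkm ω hω
    simp only [hS, Set.mem_setOf_eq] at hω ⊢
    exact lt_of_le_of_lt (by exact_mod_cast hkm) hω
  have hempty : ⋂ k, S k = ∅ := by
    ext ω
    simp only [Set.mem_iInter, Set.mem_empty_iff_false, iff_false, not_forall]
    obtain ⟨k, hk⟩ := exists_nat_gt (g ω)
    exact ⟨k, by simp [hS, not_lt.2 hk.le]⟩
  have htends : Tendsto (fun k => P (S k)) atTop (nhds 0) := by
    have := tendsto_measure_iInter_atTop (μ := P) (s := S)
      (fun k => (hmeas k).nullMeasurableSet) hanti ⟨0, measure_ne_top _ _⟩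
    rwa [hempty, measure_empty] at this
  have hev : ∀ᶠ k in atTop, P (S k) < ENNReal.ofReal α :=
    htends.eventually_lt_const (ENNReal.ofReal_pos.2 hα)
  obtain ⟨k, hk⟩ := hev.exists
  exact ⟨(k : ℝ), hk⟩

/-- **Asymptotic efficiency of the differentially private Gaussian-mean estimate.**
With i.i.d. `Laplace(0, 2Bd/ε)` noise `δ` added to the sufficient statistic `n·x̄ = s n`,
the private posterior mean converges to the non-private one at rate `O(1/n)`: for every
`α > 0` there exist `C` and `N` such that `Pr{‖μ_DP − μ_NP‖₁ > C/n} < α` for all `n ≥ N`. -/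
theorem stmt_6 {d : ℕ} (hd : 0 < d) (Λ Λ₀ : Matrix (Fin d) (Fin d) ℝ)
    (hΛ : Λ.PosDef) (hΛ₀ : Λ₀.PosDef) (μ₀ : Fin d → ℝ)
    (B ε : ℝ) (hB : 0 < B) (hε : 0 < ε)
    {Ω : Type*} [MeasurableSpace Ω] (P : Measure Ω) [IsProbabilityMeasure P]
    (δ : Ω → Fin d → ℝ) (hmeas : ∀ j, Measurable fun ω => δ ω j)
    (hlaw : ∀ j, Measure.map (fun ω => δ ω j) P = laplaceMeasure (2 * B * d / ε))
    (hindep : iIndepFun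
      (fun j ω => δ ω j) P)
    (s : ℕ → Fin d → ℝ) :
    ∀ α : ℝ, 0 < α → ∃ (C : ℝ) (N : ℕ), ∀ n ≥ N,
      P {ω | C / n <
          l1 (postMean Λ Λ₀ μ₀ n (s n + δ ω) - postMean Λ Λ₀ μ₀ n (s n))}
        < ENNReal.ofReal α := by
  intro α hα
  -- measurability of the ℓ¹ norm of the noise
  have hg : Measurable fun ω => l1 (δ ω) := by
    simp only [l1]
    exact Finset.measurable_sum _ fun j _ => (hmeas j).abs
  obtain ⟨M, hM⟩ := exists_tail_bound P _ hg hα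
  -- constant controlling the inverse matrices along the sequence
  set K : ℝ := Esum Λ⁻¹ + 1 with hK
  have hKpos : Esum Λ⁻¹ < K := by simp [hK]
  have htends := (continuous_Esum.tendsto _).comp
    (tendsto_inv_seq Λ Λ₀ hΛ.det_pos.ne'.isUnit)
  have hev : ∀ᶠ n : ℕ in atTop, Esum ((n : ℝ)⁻¹ • Λ₀ + Λ)⁻¹ ≤ K :=
    (htends.eventually_lt_const hKpos).mono fun n hn => hn.le
  obtain ⟨N₀, hN₀⟩ := eventually_atTop.1 hev
  refine ⟨K * Esum Λ * M, max N₀ 1, fun n hn => ?_⟩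
  have hn1 : 1 ≤ n := le_trans (le_max_right _ _) hn
  have hnN₀ : N₀ ≤ n := le_trans (le_max_left _ _) hn
  have hn0 : (0 : ℝ) < (n : ℝ) := by exact_mod_cast hn1
  -- the deterministic bound on the good event
  have hsub : {ω | K * Esum Λ * M / n <
      l1 (postMean Λ Λ₀ μ₀ n (s n + δ ω) - postMean Λ Λ₀ μ₀ n (s n))}
      ⊆ {ω | M < l1 (δ ω)} := by
    intro ω hω
    by_contra hle
    simp only [Set.mem_setOf_eq, not_lt] at hle
    apply absurd hω
    simp only [Set.mem_setOf_eq, not_lt]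
    -- difference of posterior means
    have hdiff : postMean Λ Λ₀ μ₀ n (s n + δ ω) - postMean Λ Λ₀ μ₀ n (s n)
        = (Λ₀ + (n : ℝ) • Λ)⁻¹ *ᵥ (Λ *ᵥ δ ω) := by
      simp only [postMean, Matrix.mulVec_add]
      abel
    -- factor out 1/n from the inverse
    have hdet : IsUnit ((n : ℝ)⁻¹ • Λ₀ + Λ).det :=
      isUnit_det_smul_add Λ Λ₀ hΛ hΛ₀ (inv_nonneg.2 hn0.le)
    have hfac : Λ₀ + (n : ℝ) • Λ = (n : ℝ) • ((n : ℝ)⁻¹ • Λ₀ + Λ) := by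
      rw [smul_add, smul_smul, mul_inv_cancel₀ hn0.ne', one_smul]
    have hinv : (Λ₀ + (n : ℝ) • Λ)⁻¹ = (n : ℝ)⁻¹ • ((n : ℝ)⁻¹ • Λ₀ + Λ)⁻¹ := by
      rw [hfac, inv_smul_mat _ _ hn0.ne' hdet]
    rw [hdiff, hinv, Matrix.smul_mulVec, l1_smul,
      abs_of_nonneg (inv_nonneg.2 hn0.le)]
    have hb1 : l1 (((n : ℝ)⁻¹ • Λ₀ + Λ)⁻¹ *ᵥ (Λ *ᵥ δ ω))
        ≤ K * (Esum Λ * M) := by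
      calc l1 (((n : ℝ)⁻¹ • Λ₀ + Λ)⁻¹ *ᵥ (Λ *ᵥ δ ω))
          ≤ Esum ((n : ℝ)⁻¹ • Λ₀ + Λ)⁻¹ * l1 (Λ *ᵥ δ ω) := l1_mulVec_le _ _
        _ ≤ K * (Esum Λ * M) := by
            refine mul_le_mul (hN₀ n hnN₀) ?_ (l1_nonneg _)
              (le_trans (Esum_nonneg _) (hN₀ n hnN₀))
            calc l1 (Λ *ᵥ δ ω) ≤ Esum Λ * l1 (δ ω) := l1_mulVec_le _ _
              _ ≤ Esum Λ * M := mul_le_mul_of_nonneg_left hle (Esum_nonneg _)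
    calc (n : ℝ)⁻¹ * l1 (((n : ℝ)⁻¹ • Λ₀ + Λ)⁻¹ *ᵥ (Λ *ᵥ δ ω))
        ≤ (n : ℝ)⁻¹ * (K * (Esum Λ * M)) :=
          mul_le_mul_of_nonneg_left hb1 (inv_nonneg.2 hn0.le)
      _ = K * Esum Λ * M / n := by ring
  exact lt_of_le_of_lt (measure_mono hsub) hM
end

section
/- Let ε > 0, p₁ + p₂ + p₃ = 1 with pᵢ > 0, and B_x, B_y > 0. Consider the mechanism that takes a data set of n pairs (xⱼ, yⱼ) ∈ ℝ^d × ℝ, clips each coordinate of xⱼ to [−B_x, B_x] and each yⱼ to [−B_y, B_y] to obtain (cⱼ, eⱼ), and releases (S_xx, S_xy, S_yy) where S_xx = Σⱼ cⱼcⱼᵀ + P with P a symmetric matrix whose upper-triangular (including diagonal) entries are independent Laplace(0, d(d+1)B_x²/(p₁ε)) noise, S_xy = Σⱼ eⱼcⱼ + Q with Q having independent Laplace(0, 2dB_xB_y/(p₂ε)) coordinates, and S_yy = Σⱼ eⱼ² + R with R ∼ Laplace(0, B_y²/(p₃ε)). Then this mechanism is ε-differentially private: for any two data sets of equal size differing in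 exactly one pair, the output distributions satisfy the ε-differential privacy inequality on every measurable set. -/
open MeasureTheory ProbabilityTheory
open ENNReal

/-- Clip (project) a real number to the interval `[-B, B]`. -/
def clip (B t : ℝ) : ℝ := max (-B) (min B t)

/-- Index set for the scalar noise variables of the DiffPriSS mechanism: the `d(d+1)/2`
upper-triangular (including diagonal) entries of the noise matrix `P`, the `d` coordinates
of the noise vector `Q`, and the single noise scalar `R`. -/
def NoiseIdx (d : ℕ) : Type := {p : Fin d × Fin d // p.1 ≤ p.2} ⊕ (Fin d ⊕ Unit)

/-- Assemble a symmetric matrix from its upper-triangular (including diagonal) entries. -/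
def symMatrixOf {d : ℕ} (u : {p : Fin d × Fin d // p.1 ≤ p.2} → ℝ) (i k : Fin d) : ℝ :=
  if h : i ≤ k then u ⟨(i, k), h⟩ else u ⟨(k, i), le_of_not_ge h⟩

/-- The DiffPriSS mechanism: clip each data point `(xⱼ, yⱼ)` coordinatewise to
`[-Bx, Bx]^d × [-By, By]` obtaining `(cⱼ, eⱼ)`, and release the sufficient statistics
`S_xx = ∑ⱼ cⱼcⱼᵀ + P`, `S_xy = ∑ⱼ eⱼcⱼ + Q`, `S_yy = ∑ⱼ eⱼ² + R` perturbed by the noise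
variables `noise`. The output distribution is the law of the perturbed statistics. -/
noncomputable def diffPriSS {d n : ℕ} {Ω : Type*} [MeasurableSpace Ω] (P : Measure Ω)
    (Bx By : ℝ) (noise : NoiseIdx d → Ω → ℝ) (D : Fin n → (Fin d → ℝ) × ℝ) :
    Measure ((Fin d → Fin d → ℝ) × (Fin d → ℝ) × ℝ) :=
  Measure.map (fun ω =>
    ((fun i k => (∑ j, clip Bx ((D j).1 i) * clip Bx ((D j).1 k)) +
        symMatrixOf (fun p => noise (Sum.inl p) ω) i k),
     (fun i => (∑ j, clip By (D j).2 * clip Bx ((D j).1 i)) +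
        noise (Sum.inr (Sum.inl i)) ω),
     (∑ j, clip By (D j).2 ^ 2) + noise (Sum.inr (Sum.inr ())) ω)) P

/- ## Auxiliary instances and lemmas -/

instance (d : ℕ) : Fintype (NoiseIdx d) :=
  inferInstanceAs (Fintype ({p : Fin d × Fin d // p.1 ≤ p.2} ⊕ (Fin d ⊕ Unit)))

instance (d : ℕ) : DecidableEq (NoiseIdx d) :=
  inferInstanceAs (DecidableEq ({p : Fin d × Fin d // p.1 ≤ p.2} ⊕ (Fin d ⊕ Unit)))

lemma DPaux.laplace_density_meas (b : ℝ) :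
    Measurable fun x : ℝ => ENNReal.ofReal ((2 * b)⁻¹ * Real.exp (-|x| / b)) := by
  fun_prop

lemma DPaux.laplace_shift_le (b τ : ℝ) (hb : 0 < b) {g : ℝ → ℝ≥0∞} (hg : Measurable g) :
    ∫⁻ x, g (x + τ) ∂laplaceMeasure b
      ≤ ENNReal.ofReal (Real.exp (|τ| / b)) * ∫⁻ x, g x ∂laplaceMeasure b := by
  set f : ℝ → ℝ≥0∞ := fun x => ENNReal.ofReal ((2 * b)⁻¹ * Real.exp (-|x| / b)) with hf
  have hfm : Measurable f := DPaux.laplace_density_meas b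
  rw [laplaceMeasure, ← hf,
    lintegral_withDensity_eq_lintegral_mul volume hfm (g := fun x => g (x + τ))
      (hg.comp (measurable_add_const τ)),
    lintegral_withDensity_eq_lintegral_mul volume hfm hg]
  have h1 : ∫⁻ x, (f * fun x => g (x + τ)) x ∂volume
      = ∫⁻ y, f (y - τ) * g y ∂volume := by
    rw [← lintegral_add_right_eq_self (fun y => f (y - τ) * g y) τ]
    congr 1; funext x; simp
  rw [h1]
  have h2 : ∀ y, f (y - τ) * g y ≤ ENNReal.ofReal (Real.exp (|τ| / b)) * (f y * g y) := by
    intro y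
    rw [← mul_assoc]
    refine mul_le_mul_left ?_ _
    rw [hf]
    beta_reduce
    rw [← ENNReal.ofReal_mul (Real.exp_nonneg _)]
    apply ENNReal.ofReal_le_ofReal
    rw [mul_comm (Real.exp _), mul_assoc, ← Real.exp_add]
    have hexp : Real.exp (-|y - τ| / b) ≤ Real.exp (-|y| / b + |τ| / b) := by
      apply Real.exp_le_exp.2
      rw [← add_div, div_le_div_iff_of_pos_right hb]
      have := abs_sub_abs_le_abs_sub y τ
      linarith
    have h2b : (0:ℝ) ≤ (2 * b)⁻¹ := by positivity
    nlinarith [Real.exp_nonneg (-|y - τ| / b)]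
  calc ∫⁻ y, f (y - τ) * g y ∂volume
      ≤ ∫⁻ y, ENNReal.ofReal (Real.exp (|τ| / b)) * (f y * g y) ∂volume :=
        lintegral_mono h2
    _ = ENNReal.ofReal (Real.exp (|τ| / b)) * ∫⁻ y, (f * g) y ∂volume := by
        rw [← lintegral_const_mul _ (hfm.mul hg)]; rfl

lemma DPaux.lmarginal_shift_le {ι : Type*} [Fintype ι] [DecidableEq ι]
    (μ : ι → Measure ℝ) [∀ i, SigmaFinite (μ i)] (t : ι → ℝ) (c : ι → ℝ≥0∞)
    (hμ : ∀ i (g : ℝ → ℝ≥0∞), Measurable g →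
      ∫⁻ x, g (x + t i) ∂μ i ≤ c i * ∫⁻ x, g x ∂μ i)
    (s : Finset ι) :
    ∀ (g : (ι → ℝ) → ℝ≥0∞), Measurable g →
      (∫⋯∫⁻_s, (fun z => g (fun k => z k + if k ∈ s then t k else 0)) ∂μ)
        ≤ (∏ i ∈ s, c i) • (∫⋯∫⁻_s, g ∂μ) := by
  induction s using Finset.induction_on with
  | empty =>
    intro g hg
    simp only [lmarginal_empty, Finset.prod_empty, one_smul, Finset.notMem_empty,
      if_false, add_zero]
    intro z
    exact le_of_eq rfl
  | @insert i s his ih =>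
    intro g hg
    set g' : (ι → ℝ) → ℝ≥0∞ := fun w => g (Function.update w i (w i + t i)) with hg'def
    have hg'm : Measurable g' := by
      apply hg.comp
      exact measurable_update'.comp
        (measurable_id.prodMk ((measurable_pi_apply i).add_const _))
    have hshift : (fun z : ι → ℝ => g (fun k => z k + if k ∈ insert i s then t k else 0))
        = fun z => g' (fun k => z k + if k ∈ s then t k else 0) := by
      funext z
      rw [hg'def]
      congr 1
      funext k
      by_cases hk : k = i
      · subst hk
        simp [Function.update_self, his, his]
      · simp [Function.update_of_ne hk, Finset.mem_insert, hk]
    intro x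
    have hh : Measurable fun z : ι → ℝ => g (fun k => z k + if k ∈ insert i s then t k else 0) := by
      apply hg.comp
      exact measurable_pi_lambda _ fun k => (measurable_pi_apply k).add_const _
    rw [lmarginal_insert _ hh his]
    calc ∫⁻ y, (∫⋯∫⁻_s, (fun z => g (fun k => z k + if k ∈ insert i s then t k else 0)) ∂μ)
            (Function.update x i y) ∂μ i
        ≤ ∫⁻ y, (∏ j ∈ s, c j) * (∫⋯∫⁻_s, g' ∂μ) (Function.update x i y) ∂μ i := by
          apply lintegral_mono
          intro y
          rw [hshift]
          exact ih g' hg'm (Function.update x i y)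
      _ = (∏ j ∈ s, c j) * ∫⁻ y, (∫⋯∫⁻_s, g' ∂μ) (Function.update x i y) ∂μ i := by
          rw [lintegral_const_mul _
            (show Measurable fun y => (∫⋯∫⁻_s, g' ∂μ) (Function.update x i y) from
              (Measurable.lmarginal μ hg'm).comp (measurable_update x))]
      _ ≤ (∏ j ∈ s, c j) * (c i * ∫⁻ y, (∫⋯∫⁻_s, g ∂μ) (Function.update x i y) ∂μ i) := by
          apply mul_le_mul_right
          have key : ∀ y, (∫⋯∫⁻_s, g' ∂μ) (Function.update x i y)
              = (∫⋯∫⁻_s, g ∂μ) (Function.update x i (y + t i)) := by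
            intro y
            rw [lmarginal, lmarginal]
            congr 1
            funext w
            refine congrArg g (funext fun k => ?_)
            by_cases hk : k ∈ s
            · have hki : k ≠ i := fun h => his (h ▸ hk)
              rw [Function.update_of_ne hki]
              simp [Function.updateFinset, hk]
            · by_cases hki : k = i
              · subst hki
                simp [Function.updateFinset, hk]
              · rw [Function.update_of_ne hki]
                simp [Function.updateFinset, hk, hki]
          simp_rw [key]
          exact hμ i (fun y => (∫⋯∫⁻_s, g ∂μ) (Function.update x i y))
            ((Measurable.lmarginal μ hg).comp (measurable_update x))
      _ = ((∏ j ∈ insert i s, c j) • (∫⋯∫⁻_insert i s, g ∂μ)) x := by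
          simp only [Pi.smul_apply, smul_eq_mul, lmarginal_insert _ hg his,
            Finset.prod_insert his]
          ring

lemma DPaux.pi_shift_le {ι : Type*} [Fintype ι] [DecidableEq ι]
    (μ : ι → Measure ℝ) [∀ i, SigmaFinite (μ i)] (t : ι → ℝ) (c : ι → ℝ≥0∞)
    (hμ : ∀ i (g : ℝ → ℝ≥0∞), Measurable g →
      ∫⁻ x, g (x + t i) ∂μ i ≤ c i * ∫⁻ x, g x ∂μ i)
    {A : Set (ι → ℝ)} (hA : MeasurableSet A) :
    Measure.pi μ ((fun z => z + t) ⁻¹' A) ≤ (∏ i, c i) * Measure.pi μ A := by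
  have hg : Measurable (A.indicator (fun _ => (1:ℝ≥0∞))) :=
    measurable_const.indicator hA
  have hind : ∀ z : ι → ℝ, A.indicator (fun _ => (1:ℝ≥0∞)) (z + t)
      = ((fun z : ι → ℝ => z + t) ⁻¹' A).indicator (fun _ => (1:ℝ≥0∞)) z := by
    intro z
    by_cases h : z + t ∈ A <;> simp [Set.indicator, h]
  have h1 : Measure.pi μ ((fun z => z + t) ⁻¹' A)
      = ∫⁻ z, A.indicator (fun _ => (1:ℝ≥0∞)) (z + t) ∂Measure.pi μ := by
    simp_rw [hind]
    exact (lintegral_indicator_one (hA.preimage (measurable_id.add_const t))).symm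
  have h2 : Measure.pi μ A = ∫⁻ z, A.indicator (fun _ => (1:ℝ≥0∞)) z ∂Measure.pi μ :=
    (lintegral_indicator_one hA).symm
  rw [h1, h2]
  have key := DPaux.lmarginal_shift_le μ t c hμ Finset.univ (A.indicator fun _ => (1:ℝ≥0∞)) hg
  have h3 : (fun z : ι → ℝ =>
        A.indicator (fun _ => (1:ℝ≥0∞)) (fun k => z k + if k ∈ Finset.univ then t k else 0))
      = fun z => A.indicator (fun _ => (1:ℝ≥0∞)) (z + t) := by
    funext z
    simp only [Finset.mem_univ, if_true]
    rfl
  rw [lintegral_eq_lmarginal_univ (0 : ι → ℝ), lintegral_eq_lmarginal_univ (0 : ι → ℝ)]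
  calc (∫⋯∫⁻_Finset.univ, (fun z => A.indicator (fun _ => (1:ℝ≥0∞)) (z + t)) ∂μ) (0 : ι → ℝ)
      = (∫⋯∫⁻_Finset.univ, (fun z => A.indicator (fun _ => (1:ℝ≥0∞))
          (fun k => z k + if k ∈ Finset.univ then t k else 0)) ∂μ) (0 : ι → ℝ) := by rw [h3]
    _ ≤ ((∏ i, c i) • (∫⋯∫⁻_Finset.univ, (A.indicator fun _ => (1:ℝ≥0∞)) ∂μ)) (0 : ι → ℝ) :=
        key _
    _ = (∏ i, c i) * (∫⋯∫⁻_Finset.univ, (A.indicator fun _ => (1:ℝ≥0∞)) ∂μ) (0 : ι → ℝ) := rfl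

lemma DPaux.law_eq_pi {ι : Type*} [Fintype ι] {Ω : Type*} [MeasurableSpace Ω]
    (P : Measure Ω) [IsProbabilityMeasure P] (X : ι → Ω → ℝ)
    (hX : ∀ i, Measurable (X i))
    (hind : iIndepFun X P) :
    Measure.map (fun ω i => X i ω) P = Measure.pi (fun i => Measure.map (X i) P) := by
  have : ∀ i, IsProbabilityMeasure (Measure.map (X i) P) :=
    fun i => Measure.isProbabilityMeasure_map (hX i).aemeasurable
  refine (Measure.pi_eq fun s hs => ?_).symm
  rw [Measure.map_apply (measurable_pi_lambda _ fun i => hX i)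
    (MeasurableSet.univ_pi hs)]
  have hpre : (fun ω i => X i ω) ⁻¹' Set.pi Set.univ s = ⋂ i, X i ⁻¹' s i := by
    ext ω; simp [Set.mem_univ_pi]
  rw [hpre, hind.meas_iInter fun i => ⟨s i, hs i, rfl⟩]
  exact Finset.prod_congr rfl fun i _ =>
    (Measure.map_apply (hX i) (hs i)).symm

lemma DPaux.abs_clip_le {B : ℝ} (hB : 0 ≤ B) (x : ℝ) : |clip B x| ≤ B := by
  rw [clip, abs_le]
  constructor
  · exact le_max_left _ _
  · exact max_le (by linarith) (min_le_left _ _)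

lemma DPaux.card_le (d : ℕ) :
    2 * Fintype.card {p : Fin d × Fin d // p.1 ≤ p.2} ≤ d * (d + 1) := by
  have hinj : Function.Injective
      (fun p : {p : Fin d × Fin d // p.1 ≤ p.2} => Sym2.mk p.1.1 p.1.2) := by
    rintro ⟨⟨a, b⟩, hab⟩ ⟨⟨c, e⟩, hce⟩ h
    simp only [Sym2.eq_iff] at h
    rcases h with ⟨h1, h2⟩ | ⟨h1, h2⟩
    · simp [h1, h2]
    · simp only at hab hce
      subst h1; subst h2
      have : b = a := le_antisymm hce hab
      simp [this]
  have hcard := Fintype.card_le_of_injective _ hinj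
  rw [Sym2.card] at hcard
  have h2 : (Fintype.card (Fin d) + 1).choose 2 = (d + 1) * d / 2 := by
    rw [Fintype.card_fin, Nat.choose_two_right]
    simp
  rw [h2] at hcard
  have heven : 2 ∣ (d + 1) * d := by
    rcases Nat.even_mul_succ_self d with ⟨k, hk⟩
    exact ⟨k, by linarith⟩
  calc 2 * Fintype.card {p : Fin d × Fin d // p.1 ≤ p.2}
      ≤ 2 * ((d + 1) * d / 2) := by omega
    _ = (d + 1) * d := by omega
    _ = d * (d + 1) := by ring

lemma DPaux.abs_sub_le' (a b : ℝ) : |a - b| ≤ |a| + |b| := by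
  rw [sub_eq_add_neg]
  exact (abs_add_le _ _).trans (by rw [abs_neg])

set_option maxHeartbeats 2000000 in
/-- **ε-differential privacy of the DiffPriSS sufficient-statistics release.** With
independent Laplace noise of scales `d(d+1)Bx²/(p₁ε)`, `2dBxBy/(p₂ε)` and `By²/(p₃ε)` on
the three clipped sufficient statistics, the mechanism is `ε`-differentially private:
for data sets of equal size differing in one pair, the output distributions satisfy the
`ε`-DP inequality on every measurable set. -/
theorem stmt_11 {d n : ℕ} (hd : 0 < d)
    (ε p₁ p₂ p₃ Bx By : ℝ) (hε : 0 < ε)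
    (hp₁ : 0 < p₁) (hp₂ : 0 < p₂) (hp₃ : 0 < p₃) (hsum : p₁ + p₂ + p₃ = 1)
    (hBx : 0 < Bx) (hBy : 0 < By)
    {Ω : Type*} [MeasurableSpace Ω] (P : Measure Ω) [IsProbabilityMeasure P]
    (noise : NoiseIdx d → Ω → ℝ) (hmeas : ∀ idx, Measurable (noise idx))
    (hlawP : ∀ p, Measure.map (noise (Sum.inl p)) P
      = laplaceMeasure (d * (d + 1) * Bx ^ 2 / (p₁ * ε)))
    (hlawQ : ∀ i, Measure.map (noise (Sum.inr (Sum.inl i))) P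
      = laplaceMeasure (2 * d * Bx * By / (p₂ * ε)))
    (hlawR : Measure.map (noise (Sum.inr (Sum.inr ()))) P
      = laplaceMeasure (By ^ 2 / (p₃ * ε)))
    (hindep : iIndepFun noise P) :
    ∀ D D' : Fin n → (Fin d → ℝ) × ℝ,
      (∃ j₀, ∀ j, j ≠ j₀ → D j = D' j) →
      ∀ S : Set ((Fin d → Fin d → ℝ) × (Fin d → ℝ) × ℝ), MeasurableSet S →
        diffPriSS P Bx By noise D S
          ≤ ENNReal.ofReal (Real.exp ε) * diffPriSS P Bx By noise D' S := by
  classical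
  intro D D' hDD' S hS
  obtain ⟨j₀, hj⟩ := hDD'
  have hd' : (0:ℝ) < d := by exact_mod_cast hd
  set b₁ : ℝ := (d : ℝ) * (d + 1) * Bx ^ 2 / (p₁ * ε) with hb₁
  set b₂ : ℝ := 2 * d * Bx * By / (p₂ * ε) with hb₂
  set b₃ : ℝ := By ^ 2 / (p₃ * ε) with hb₃
  have hb₁pos : 0 < b₁ := div_pos (by positivity) (by positivity)
  have hb₂pos : 0 < b₂ := div_pos (by positivity) (by positivity)
  have hb₃pos : 0 < b₃ := div_pos (by positivity) (by positivity)
  set μ : NoiseIdx d → Measure ℝ := fun idx => Measure.map (noise idx) P with hμdef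
  haveI hprob : ∀ idx, IsProbabilityMeasure (μ idx) :=
    fun idx => Measure.isProbabilityMeasure_map (hmeas idx).aemeasurable
  haveI hσ : ∀ idx, SigmaFinite (μ idx) := fun idx => by
    have := hprob idx
    infer_instance
  set b : NoiseIdx d → ℝ := fun idx => match idx with
    | Sum.inl _ => b₁
    | Sum.inr (Sum.inl _) => b₂
    | Sum.inr (Sum.inr _) => b₃ with hbdef
  have hbpos : ∀ idx, 0 < b idx := by
    rintro (p | i | u)
    · exact hb₁pos
    · exact hb₂pos
    · exact hb₃pos
  have hlaw : ∀ idx, μ idx = laplaceMeasure (b idx) := by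
    rintro (p | i | u)
    · exact hlawP p
    · exact hlawQ i
    · cases u; exact hlawR
  -- statistics
  set Axx : (Fin n → (Fin d → ℝ) × ℝ) → Fin d → Fin d → ℝ :=
    fun E i k => ∑ j, clip Bx ((E j).1 i) * clip Bx ((E j).1 k) with hAxx
  set Bxy : (Fin n → (Fin d → ℝ) × ℝ) → Fin d → ℝ :=
    fun E i => ∑ j, clip By (E j).2 * clip Bx ((E j).1 i) with hBxy
  set Cyy : (Fin n → (Fin d → ℝ) × ℝ) → ℝ :=
    fun E => ∑ j, clip By (E j).2 ^ 2 with hCyy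
  set G : (Fin n → (Fin d → ℝ) × ℝ) → (NoiseIdx d → ℝ) →
      ((Fin d → Fin d → ℝ) × (Fin d → ℝ) × ℝ) :=
    fun E z => ((fun i k => Axx E i k + symMatrixOf (fun p => z (Sum.inl p)) i k),
      (fun i => Bxy E i + z (Sum.inr (Sum.inl i))),
      Cyy E + z (Sum.inr (Sum.inr ()))) with hGdef
  have hGmeas : ∀ E, Measurable (G E) := by
    intro E
    rw [hGdef]
    refine Measurable.prod ?_ (Measurable.prod ?_ ?_)
    · apply measurable_pi_lambda
      intro i
      apply measurable_pi_lambda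
      intro k
      apply Measurable.const_add
      have : (fun z : NoiseIdx d → ℝ => symMatrixOf (fun p => z (Sum.inl p)) i k)
          = if h : i ≤ k then (fun z : NoiseIdx d → ℝ => z (Sum.inl ⟨(i,k), h⟩))
            else (fun z : NoiseIdx d → ℝ => z (Sum.inl ⟨(k,i), le_of_not_ge h⟩)) := by
        by_cases h : i ≤ k <;> simp [symMatrixOf, h]
      rw [this]
      split <;> exact measurable_pi_apply _
    · apply measurable_pi_lambda
      intro i
      exact Measurable.const_add (measurable_pi_apply _) _
    · exact Measurable.const_add (measurable_pi_apply _) _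
  have hZ : Measurable (fun ω (idx : NoiseIdx d) => noise idx ω) :=
    measurable_pi_lambda _ hmeas
  have hνeq : Measure.map (fun ω (idx : NoiseIdx d) => noise idx ω) P = Measure.pi μ :=
    DPaux.law_eq_pi P noise hmeas hindep
  have hdiff : ∀ E, diffPriSS P Bx By noise E
      = Measure.map (G E) (Measure.map (fun ω idx => noise idx ω) P) := by
    intro E
    rw [Measure.map_map (hGmeas E) hZ, hGdef, hAxx, hBxy, hCyy]
    rfl
  -- the shift vector
  set t : NoiseIdx d → ℝ := fun idx => match idx with
    | Sum.inl p => Axx D p.1.1 p.1.2 - Axx D' p.1.1 p.1.2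
    | Sum.inr (Sum.inl i) => Bxy D i - Bxy D' i
    | Sum.inr (Sum.inr _) => Cyy D - Cyy D' with htdef
  have hsymm : ∀ E (i k : Fin d), Axx E i k = Axx E k i := by
    intro E i k
    rw [hAxx]
    exact Finset.sum_congr rfl fun j _ => mul_comm _ _
  have hGshift : ∀ z, G D z = G D' (z + t) := by
    intro z
    rw [hGdef]
    refine Prod.ext ?_ (Prod.ext ?_ ?_)
    · funext i k
      show Axx D i k + symMatrixOf (fun p => z (Sum.inl p)) i k
        = Axx D' i k + symMatrixOf (fun p => (z + t) (Sum.inl p)) i k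
      by_cases h : i ≤ k
      · simp only [symMatrixOf, dif_pos h]
        have ht : t (Sum.inl ⟨(i,k), h⟩) = Axx D i k - Axx D' i k := rfl
        linarith [Pi.add_apply z t (Sum.inl ⟨(i,k), h⟩ : NoiseIdx d), ht]
      · simp only [symMatrixOf, dif_neg h]
        have ht : t (Sum.inl ⟨(k,i), le_of_not_ge h⟩) = Axx D k i - Axx D' k i := rfl
        linarith [Pi.add_apply z t (Sum.inl ⟨(k,i), le_of_not_ge h⟩ : NoiseIdx d), ht,
          hsymm D k i, hsymm D' k i]
    · funext i
      show Bxy D i + z (Sum.inr (Sum.inl i))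
        = Bxy D' i + (z + t) (Sum.inr (Sum.inl i))
      have ht : t (Sum.inr (Sum.inl i)) = Bxy D i - Bxy D' i := rfl
      linarith [Pi.add_apply z t (Sum.inr (Sum.inl i) : NoiseIdx d), ht]
    · show Cyy D + z (Sum.inr (Sum.inr ()))
        = Cyy D' + (z + t) (Sum.inr (Sum.inr ()))
      have ht : t (Sum.inr (Sum.inr ())) = Cyy D - Cyy D' := rfl
      linarith [Pi.add_apply z t (Sum.inr (Sum.inr ()) : NoiseIdx d), ht]
  -- bounds on |t|
  have habsx : ∀ x, |clip Bx x| ≤ Bx := DPaux.abs_clip_le hBx.le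
  have habsy : ∀ x, |clip By x| ≤ By := DPaux.abs_clip_le hBy.le
  have hsumdiff : ∀ (f f' : Fin n → ℝ), (∀ j, j ≠ j₀ → f j = f' j) →
      (∑ j, f j) - (∑ j, f' j) = f j₀ - f' j₀ := by
    intro f f' h
    rw [← Finset.sum_sub_distrib]
    apply Finset.sum_eq_single_of_mem j₀ (Finset.mem_univ _)
    intro j _ hjj
    rw [h j hjj]
    ring
  have ht1 : ∀ p : {p : Fin d × Fin d // p.1 ≤ p.2}, |t (Sum.inl p)| ≤ 2 * Bx ^ 2 := by
    intro p
    have hdd : t (Sum.inl p) = Axx D p.1.1 p.1.2 - Axx D' p.1.1 p.1.2 := rfl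
    have hsingle := hsumdiff (fun j => clip Bx ((D j).1 p.1.1) * clip Bx ((D j).1 p.1.2))
      (fun j => clip Bx ((D' j).1 p.1.1) * clip Bx ((D' j).1 p.1.2))
      (fun j hjj => by beta_reduce; rw [hj j hjj])
    rw [hdd, hAxx]
    beta_reduce
    rw [hsingle]
    beta_reduce
    refine (DPaux.abs_sub_le' _ _).trans ?_
    have h1 := habsx ((D j₀).1 p.1.1)
    have h2 := habsx ((D j₀).1 p.1.2)
    have h3 := habsx ((D' j₀).1 p.1.1)
    have h4 := habsx ((D' j₀).1 p.1.2)
    have e1 : |clip Bx ((D j₀).1 p.1.1) * clip Bx ((D j₀).1 p.1.2)| ≤ Bx * Bx := by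
      rw [abs_mul]
      exact mul_le_mul h1 h2 (abs_nonneg _) hBx.le
    have e2 : |clip Bx ((D' j₀).1 p.1.1) * clip Bx ((D' j₀).1 p.1.2)| ≤ Bx * Bx := by
      rw [abs_mul]
      exact mul_le_mul h3 h4 (abs_nonneg _) hBx.le
    nlinarith
  have ht2 : ∀ i : Fin d, |t (Sum.inr (Sum.inl i))| ≤ 2 * Bx * By := by
    intro i
    have hdd : t (Sum.inr (Sum.inl i)) = Bxy D i - Bxy D' i := rfl
    have hsingle := hsumdiff (fun j => clip By (D j).2 * clip Bx ((D j).1 i))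
      (fun j => clip By (D' j).2 * clip Bx ((D' j).1 i))
      (fun j hjj => by beta_reduce; rw [hj j hjj])
    rw [hdd, hBxy]
    beta_reduce
    rw [hsingle]
    beta_reduce
    refine (DPaux.abs_sub_le' _ _).trans ?_
    have h1 := habsy (D j₀).2
    have h2 := habsx ((D j₀).1 i)
    have h3 := habsy (D' j₀).2
    have h4 := habsx ((D' j₀).1 i)
    have e1 : |clip By (D j₀).2 * clip Bx ((D j₀).1 i)| ≤ By * Bx := by
      rw [abs_mul]
      exact mul_le_mul h1 h2 (abs_nonneg _) hBy.le
    have e2 : |clip By (D' j₀).2 * clip Bx ((D' j₀).1 i)| ≤ By * Bx := by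
      rw [abs_mul]
      exact mul_le_mul h3 h4 (abs_nonneg _) hBy.le
    nlinarith
  have ht3 : |t (Sum.inr (Sum.inr ()))| ≤ By ^ 2 := by
    have hdd : t (Sum.inr (Sum.inr ())) = Cyy D - Cyy D' := rfl
    have hsingle := hsumdiff (fun j => clip By (D j).2 ^ 2)
      (fun j => clip By (D' j).2 ^ 2)
      (fun j hjj => by beta_reduce; rw [hj j hjj])
    rw [hdd, hCyy]
    beta_reduce
    rw [hsingle]
    beta_reduce
    have h1 := habsy (D j₀).2
    have h3 := habsy (D' j₀).2
    have e1 : clip By (D j₀).2 ^ 2 ≤ By ^ 2 := by nlinarith [abs_nonneg (clip By (D j₀).2), sq_abs (clip By (D j₀).2)]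
    have e2 : clip By (D' j₀).2 ^ 2 ≤ By ^ 2 := by nlinarith [abs_nonneg (clip By (D' j₀).2), sq_abs (clip By (D' j₀).2)]
    rw [abs_le]
    constructor
    · nlinarith [sq_nonneg (clip By (D j₀).2)]
    · nlinarith [sq_nonneg (clip By (D' j₀).2)]
  -- noise comparison constants
  set c : NoiseIdx d → ℝ≥0∞ := fun idx => ENNReal.ofReal (Real.exp (|t idx| / b idx)) with hcdef
  have hcoord : ∀ idx (g : ℝ → ℝ≥0∞), Measurable g →
      ∫⁻ x, g (x + t idx) ∂μ idx ≤ c idx * ∫⁻ x, g x ∂μ idx := by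
    intro idx g hg
    rw [hlaw idx]
    exact DPaux.laplace_shift_le _ _ (hbpos idx) hg
  -- sum bound
  have hsplit : ∀ (f : NoiseIdx d → ℝ), ∑ idx : NoiseIdx d, f idx
      = (∑ p : {p : Fin d × Fin d // p.1 ≤ p.2}, f (Sum.inl p))
        + ((∑ i : Fin d, f (Sum.inr (Sum.inl i))) + f (Sum.inr (Sum.inr ()))) := by
    intro f
    calc ∑ idx : NoiseIdx d, f idx
        = ∑ idx : {p : Fin d × Fin d // p.1 ≤ p.2} ⊕ (Fin d ⊕ Unit), f idx := rfl
      _ = _ := by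
          rw [Fintype.sum_sum_type (f := f), Fintype.sum_sum_type]
          simp
  have hsumb : ∑ idx : NoiseIdx d, |t idx| / b idx ≤ ε := by
    rw [hsplit]
    have hdd1 : (0:ℝ) < (d:ℝ) * ((d:ℝ) + 1) := by nlinarith
    have hpart1 : (∑ p : {p : Fin d × Fin d // p.1 ≤ p.2}, |t (Sum.inl p)| / b (Sum.inl p))
        ≤ p₁ * ε := by
      have heach : ∀ p : {p : Fin d × Fin d // p.1 ≤ p.2},
          |t (Sum.inl p)| / b (Sum.inl p) ≤ 2 * Bx ^ 2 / b₁ := by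
        intro p
        have hbp : b (Sum.inl p) = b₁ := rfl
        rw [hbp]
        gcongr
        exact ht1 p
      have hsum1 := Finset.sum_le_card_nsmul Finset.univ
        (fun p : {p : Fin d × Fin d // p.1 ≤ p.2} => |t (Sum.inl p)| / b (Sum.inl p))
        (2 * Bx ^ 2 / b₁) (fun p _ => heach p)
      rw [Finset.card_univ, nsmul_eq_mul] at hsum1
      refine hsum1.trans ?_
      have hfrac : 2 * Bx ^ 2 / b₁ = 2 * (p₁ * ε) / ((d:ℝ) * ((d:ℝ) + 1)) := by
        rw [hb₁]
        field_simp
      rw [hfrac, ← mul_div_assoc, div_le_iff₀ hdd1]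
      have hcast : 2 * (Fintype.card {p : Fin d × Fin d // p.1 ≤ p.2} : ℝ)
          ≤ (d:ℝ) * ((d:ℝ) + 1) := by
        have := DPaux.card_le d
        push_cast
        exact_mod_cast this
      nlinarith [mul_pos hp₁ hε,
        mul_le_mul_of_nonneg_right hcast (mul_pos hp₁ hε).le]
    have hpart2 : (∑ i : Fin d, |t (Sum.inr (Sum.inl i))| / b (Sum.inr (Sum.inl i)))
        ≤ p₂ * ε := by
      have heach : ∀ i : Fin d,
          |t (Sum.inr (Sum.inl i))| / b (Sum.inr (Sum.inl i)) ≤ 2 * Bx * By / b₂ := by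
        intro i
        have hbp : b (Sum.inr (Sum.inl i)) = b₂ := rfl
        rw [hbp]
        gcongr
        exact ht2 i
      have hsum2 := Finset.sum_le_card_nsmul Finset.univ
        (fun i : Fin d => |t (Sum.inr (Sum.inl i))| / b (Sum.inr (Sum.inl i)))
        (2 * Bx * By / b₂) (fun i _ => heach i)
      rw [Finset.card_univ, Fintype.card_fin, nsmul_eq_mul] at hsum2
      refine hsum2.trans ?_
      have hfrac : 2 * Bx * By / b₂ = p₂ * ε / (d:ℝ) := by
        rw [hb₂]
        field_simp
      rw [hfrac, mul_div_cancel₀ _ (ne_of_gt hd')]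
    have hpart3 : |t (Sum.inr (Sum.inr ()))| / b (Sum.inr (Sum.inr ())) ≤ p₃ * ε := by
      have hbp : b (Sum.inr (Sum.inr ())) = b₃ := rfl
      rw [hbp]
      have : |t (Sum.inr (Sum.inr ()))| / b₃ ≤ By ^ 2 / b₃ := by
        gcongr
      refine this.trans ?_
      rw [hb₃]
      rw [div_div_eq_mul_div, div_le_iff₀ (by positivity)]
      ring_nf
      nlinarith [mul_pos hp₃ hε, sq_nonneg By]
    have : p₁ * ε + (p₂ * ε + p₃ * ε) = ε := by
      have : (p₁ + p₂ + p₃) * ε = ε := by rw [hsum, one_mul]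
      nlinarith
    linarith [hpart1, hpart2, hpart3]
  -- final chain
  rw [hdiff D, hdiff D', hνeq,
    Measure.map_apply (hGmeas D) hS, Measure.map_apply (hGmeas D') hS]
  have hpre : G D ⁻¹' S = (fun z => z + t) ⁻¹' (G D' ⁻¹' S) := by
    ext z
    simp only [Set.mem_preimage]
    rw [hGshift z]
  rw [hpre]
  have hprod : (∏ idx, c idx)
      = ENNReal.ofReal (Real.exp (∑ idx : NoiseIdx d, |t idx| / b idx)) := by
    rw [hcdef, Real.exp_sum, ENNReal.ofReal_prod_of_nonneg fun _ _ => Real.exp_nonneg _]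
  calc Measure.pi μ ((fun z => z + t) ⁻¹' (G D' ⁻¹' S))
      ≤ (∏ idx, c idx) * Measure.pi μ (G D' ⁻¹' S) :=
        DPaux.pi_shift_le μ t c hcoord (hS.preimage (hGmeas D'))
    _ ≤ ENNReal.ofReal (Real.exp ε) * Measure.pi μ (G D' ⁻¹' S) := by
        apply mul_le_mul_left
        rw [hprod]
        exact ENNReal.ofReal_le_ofReal (Real.exp_le_exp.2 hsumb)
end

section
/- Let Λ, Λ₀ be positive definite d×d real matrices, β₀ ∈ ℝ^d, S a positive definite d×d matrix, t ∈ ℝ^d, and let Δ be a fixed symmetric d×d matrix and δ ∈ ℝ^d a fixed vector. Define, for n ∈ ℕ, the non-private posterior mean μ_NP(n) = (Λ₀ + Λ·nS)⁻¹(Λ·nt + Λ₀β₀) and the private posterior mean μ_DP(n) = (Λ₀ + Λ(nS + Δ))⁻¹(Λ(nt + δ) + Λ₀β₀) (defined for n large enough that the perturbed matrix is invertible). Then ‖μ_DP(n) − μ_NP(n)‖₁ → 0 as n → ∞. -/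
open Matrix Filter

/-- **Asymptotic consistency of differentially private Bayesian linear regression.**
With sufficient statistics `n·x̄x̄ = nS` (perturbed by a fixed symmetric matrix `Δ`) and
`n·x̄y = nt` (perturbed by a fixed vector `δ`), the ℓ¹ distance between the private
posterior mean `μ_DP(n) = (Λ₀ + Λ(nS + Δ))⁻¹(Λ(nt + δ) + Λ₀β₀)` and the non-private one
`μ_NP(n) = (Λ₀ + Λ·nS)⁻¹(Λ·nt + Λ₀β₀)` tends to `0` as `n → ∞`. -/
theorem stmt_12 {d : ℕ} (Λ Λ₀ : Matrix (Fin d) (Fin d) ℝ)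
    (hΛ : Λ.PosDef) (hΛ₀ : Λ₀.PosDef) (β₀ : Fin d → ℝ)
    (S : Matrix (Fin d) (Fin d) ℝ) (hS : S.PosDef) (t : Fin d → ℝ)
    (Δ : Matrix (Fin d) (Fin d) ℝ) (hΔ : Δ.IsSymm) (δ : Fin d → ℝ) :
    Tendsto (fun n : ℕ =>
        l1 ((Λ₀ + Λ * ((n : ℝ) • S + Δ))⁻¹ *ᵥ (Λ *ᵥ ((n : ℝ) • t + δ) + Λ₀ *ᵥ β₀)
          - (Λ₀ + Λ * ((n : ℝ) • S))⁻¹ *ᵥ (Λ *ᵥ ((n : ℝ) • t) + Λ₀ *ᵥ β₀)))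
      atTop (nhds 0) := by
  -- rescaled families
  set F : ℝ → Matrix (Fin d) (Fin d) ℝ := fun x => Λ * S + x • (Λ₀ + Λ * Δ) with hF
  set F₀ : ℝ → Matrix (Fin d) (Fin d) ℝ := fun x => Λ * S + x • Λ₀ with hF₀
  set w : Fin d → ℝ := Λ *ᵥ δ + Λ₀ *ᵥ β₀ with hw
  set w₀ : Fin d → ℝ := Λ₀ *ᵥ β₀ with hw₀
  set g : ℝ → Fin d → ℝ := fun x => (F x)⁻¹ *ᵥ (Λ *ᵥ t + x • w) with hg
  set g₀ : ℝ → Fin d → ℝ := fun x => (F₀ x)⁻¹ *ᵥ (Λ *ᵥ t + x • w₀) with hg₀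
  have hdet0 : IsUnit (F 0).det := by
    have : F 0 = Λ * S := by simp [hF]
    rw [this, Matrix.det_mul]
    exact (mul_pos hΛ.det_pos hS.det_pos).ne'.isUnit
  have hdet0' : IsUnit (F₀ 0).det := by
    have : F₀ 0 = Λ * S := by simp [hF₀]
    rw [this, Matrix.det_mul]
    exact (mul_pos hΛ.det_pos hS.det_pos).ne'.isUnit
  have hFcont : Continuous F := by
    exact continuous_const.add (continuous_id.smul continuous_const)
  have hF₀cont : Continuous F₀ := by
    exact continuous_const.add (continuous_id.smul continuous_const)
  have hinvg : ContinuousAt g 0 := by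
    have h1 : ContinuousAt Inv.inv (F 0) :=
      continuousAt_matrix_inv _ (by
        have := NormedRing.inverse_continuousAt hdet0.unit
        rwa [IsUnit.unit_spec] at this)
    have h2 : ContinuousAt (fun x => (F x)⁻¹) 0 := h1.comp hFcont.continuousAt
    have h3 : ContinuousAt (fun x : ℝ => Λ *ᵥ t + x • w) 0 :=
      (continuous_const.add (continuous_id.smul continuous_const)).continuousAt
    exact (continuous_fst.matrix_mulVec continuous_snd).continuousAt.comp (h2.prodMk h3)
  have hinvg₀ : ContinuousAt g₀ 0 := by
    have h1 : ContinuousAt Inv.inv (F₀ 0) :=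
      continuousAt_matrix_inv _ (by
        have := NormedRing.inverse_continuousAt hdet0'.unit
        rwa [IsUnit.unit_spec] at this)
    have h2 : ContinuousAt (fun x => (F₀ x)⁻¹) 0 := h1.comp hF₀cont.continuousAt
    have h3 : ContinuousAt (fun x : ℝ => Λ *ᵥ t + x • w₀) 0 :=
      (continuous_const.add (continuous_id.smul continuous_const)).continuousAt
    exact (continuous_fst.matrix_mulVec continuous_snd).continuousAt.comp (h2.prodMk h3)
  have hseq : Tendsto (fun n : ℕ => (n : ℝ)⁻¹) atTop (nhds 0) :=
    tendsto_inv_atTop_zero.comp tendsto_natCast_atTop_atTop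
  -- limit of the difference
  have hdiff : Tendsto (fun n : ℕ => g ((n : ℝ)⁻¹) - g₀ ((n : ℝ)⁻¹)) atTop
      (nhds (0 : Fin d → ℝ)) := by
    have h1 := (hinvg.tendsto.comp hseq).sub (hinvg₀.tendsto.comp hseq)
    have hFF : F 0 = F₀ 0 := by simp [hF, hF₀]
    have hgg : g 0 = g₀ 0 := by simp [hg, hg₀, hFF]
    simpa [hgg] using h1
  -- eventual equality with the original sequence
  have hev : ∀ᶠ n : ℕ in atTop,
      ((Λ₀ + Λ * ((n : ℝ) • S + Δ))⁻¹ *ᵥ (Λ *ᵥ ((n : ℝ) • t + δ) + Λ₀ *ᵥ β₀)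
        - (Λ₀ + Λ * ((n : ℝ) • S))⁻¹ *ᵥ (Λ *ᵥ ((n : ℝ) • t) + Λ₀ *ᵥ β₀))
      = g ((n : ℝ)⁻¹) - g₀ ((n : ℝ)⁻¹) := by
    have hdF : Tendsto (fun n : ℕ => (F ((n : ℝ)⁻¹)).det) atTop (nhds ((F 0).det)) :=
      (hFcont.matrix_det.continuousAt.tendsto).comp hseq
    have hdF₀ : Tendsto (fun n : ℕ => (F₀ ((n : ℝ)⁻¹)).det) atTop (nhds ((F₀ 0).det)) :=
      (hF₀cont.matrix_det.continuousAt.tendsto).comp hseq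
    have hne : ∀ᶠ n : ℕ in atTop, (F ((n : ℝ)⁻¹)).det ≠ 0 :=
      hdF.eventually_ne hdet0.ne_zero
    have hne₀ : ∀ᶠ n : ℕ in atTop, (F₀ ((n : ℝ)⁻¹)).det ≠ 0 :=
      hdF₀.eventually_ne hdet0'.ne_zero
    filter_upwards [hne, hne₀, eventually_ge_atTop 1] with n h1 h2 hn1
    have hn : (0 : ℝ) < (n : ℝ) := by exact_mod_cast Nat.lt_of_lt_of_le Nat.zero_lt_one hn1
    have hu : IsUnit (n : ℝ) := hn.ne'.isUnit
    have key : ∀ (M : Matrix (Fin d) (Fin d) ℝ) (v : Fin d → ℝ), M.det ≠ 0 →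
        (((n : ℝ) • M)⁻¹ *ᵥ v) = M⁻¹ *ᵥ ((n : ℝ)⁻¹ • v) := by
      intro M v hM
      have hinv : ((n : ℝ) • M)⁻¹ = (n : ℝ)⁻¹ • M⁻¹ := by
        apply Matrix.inv_eq_right_inv
        rw [Matrix.smul_mul, Matrix.mul_smul, Matrix.mul_nonsing_inv M (isUnit_iff_ne_zero.mpr hM)]
        rw [smul_smul, mul_inv_cancel₀ hn.ne', one_smul]
      rw [hinv, Matrix.smul_mulVec, Matrix.mulVec_smul]
    have e1 : Λ₀ + Λ * ((n : ℝ) • S + Δ) = (n : ℝ) • F ((n : ℝ)⁻¹) := by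
      simp [hF, smul_add, smul_smul, mul_inv_cancel₀ hn.ne', mul_add, mul_smul_comm]
      abel
    have e2 : Λ₀ + Λ * ((n : ℝ) • S) = (n : ℝ) • F₀ ((n : ℝ)⁻¹) := by
      simp [hF₀, smul_add, smul_smul, mul_inv_cancel₀ hn.ne', mul_smul_comm]
      abel
    have v1 : (n : ℝ)⁻¹ • (Λ *ᵥ ((n : ℝ) • t + δ) + Λ₀ *ᵥ β₀)
        = Λ *ᵥ t + (n : ℝ)⁻¹ • w := by
      simp [hw, Matrix.mulVec_add, Matrix.mulVec_smul, smul_add, smul_smul,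
        inv_mul_cancel₀ hn.ne']
      abel
    have v2 : (n : ℝ)⁻¹ • (Λ *ᵥ ((n : ℝ) • t) + Λ₀ *ᵥ β₀)
        = Λ *ᵥ t + (n : ℝ)⁻¹ • w₀ := by
      simp [hw₀, Matrix.mulVec_smul, smul_add, smul_smul, inv_mul_cancel₀ hn.ne']
    rw [e1, e2, key _ _ h1, key _ _ h2, v1, v2]
  have hmain : Tendsto (fun n : ℕ =>
      ((Λ₀ + Λ * ((n : ℝ) • S + Δ))⁻¹ *ᵥ (Λ *ᵥ ((n : ℝ) • t + δ) + Λ₀ *ᵥ β₀)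
        - (Λ₀ + Λ * ((n : ℝ) • S))⁻¹ *ᵥ (Λ *ᵥ ((n : ℝ) • t) + Λ₀ *ᵥ β₀)))
      atTop (nhds (0 : Fin d → ℝ)) := Tendsto.congr' (hev.mono fun n h => h.symm) hdiff
  have hl1 : Continuous (l1 (d := d)) := by
    unfold l1
    exact continuous_finset_sum _ fun i _ => (continuous_apply i).abs
  have : l1 (0 : Fin d → ℝ) = 0 := by simp [l1]
  simpa [this, hw₀, Function.comp_def] using (hl1.continuousAt.tendsto.comp hmain)
end
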